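/- Let (X_n) be an expander of degree d and conductance c > 0, and let f_n : X_n → ℓ² be a sequence of 1-Lipschitz maps (with respect to the graph metrics) satisfying ∑_{x∈X_n} f_n(x) = 0 for every n. Then there exists R > 0 such that for all n, the number of vertices x ∈ X_n with ‖f_n(x)‖ ≤ R is strictly greater than |X_n|/2. -/

import Mathlib

open Classical in
/-- The degree of a vertex `v` in a finite simple graph. -/
noncomputable def gdeg {V : Type*} [Fintype V] (G : SimpleGraph V) (v : V) : ℕ :=
  (Finset.univ.filter fun w => G.Adj v w).card

open Classical in
/-- The boundary `∂A = {x : dist(x, A) = 1}` of a set of vertices `A`: the set of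
vertices not in `A` that are adjacent to a vertex of `A`. -/
noncomputable def graphBoundary {V : Type*} [Fintype V] (G : SimpleGraph V)
    (A : Finset V) : Finset V :=
  Finset.univ.filter fun x => x ∉ A ∧ ∃ a ∈ A, G.Adj x a

/-- An expander of degree `d` and conductance `c`: a sequence of finite connected
`d`-regular graphs whose cardinalities tend to infinity, such that every set `A`
of at most half the vertices satisfies `|∂A| ≥ c·|A|`. -/
structure Expander (d : ℕ) (c : ℝ) where
  V : ℕ → Type
  [fintype : ∀ n, Fintype (V n)]
  G : ∀ n, SimpleGraph (V n)
  connected : ∀ n, (G n).Connected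
  regular : ∀ (n : ℕ) (v : V n), gdeg (G n) v = d
  card_tendsto : Filter.Tendsto (fun n => Fintype.card (V n)) Filter.atTop Filter.atTop
  expansion : ∀ (n : ℕ) (A : Finset (V n)),
    (A.card : ℝ) ≤ (Fintype.card (V n) : ℝ) / 2 →
    c * A.card ≤ ((graphBoundary (G n) A).card : ℝ)

attribute [instance] Expander.fintype

open Classical in
/-- The finset of unordered pairs of distinct vertices. -/
noncomputable def offDiagPairs (V : Type*) [Fintype V] : Finset (Sym2 V) :=
  Finset.univ.filter fun e => ¬ e.IsDiag

/-- The squared distance `‖f x − f y‖²` as a function of the unordered pair `{x, y}`. -/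
noncomputable def sqDistFun {V H : Type*} [NormedAddCommGroup H] (f : V → H) :
    Sym2 V → ℝ :=
  Sym2.lift ⟨fun x y => ‖f x - f y‖ ^ 2, fun x y => by show ‖f x - f y‖ ^ 2 = ‖f y - f x‖ ^ 2; rw [norm_sub_rev]⟩

/-- `∑_{{x,y} ∈ P} ‖f x − f y‖²`, summed over unordered pairs of distinct vertices. -/
noncomputable def pairSqSum {V : Type*} [Fintype V] {H : Type*} [NormedAddCommGroup H]
    (f : V → H) : ℝ :=
  ∑ e ∈ offDiagPairs V, sqDistFun f e

open Classical in
/-- `∑_{{x,y} ∈ E} ‖f x − f y‖²`, summed over the edges of `G`. -/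
noncomputable def edgeSqSum {V : Type*} [Fintype V] (G : SimpleGraph V)
    {H : Type*} [NormedAddCommGroup H] (f : V → H) : ℝ :=
  ∑ e ∈ G.edgeFinset, sqDistFun f e

open Classical in
/-- The number of edges of a finite simple graph. -/
noncomputable def edgeCount {V : Type*} [Fintype V] (G : SimpleGraph V) : ℕ :=
  G.edgeFinset.card

open Finset

section Helpers
variable {V : Type*} [Fintype V]

open Classical in
noncomputable def adjP (G : SimpleGraph V) : Finset (V × V) :=
  Finset.univ.filter fun p => G.Adj p.1 p.2

noncomputable def aSum (G : SimpleGraph V) (F : V → V → ℝ) : ℝ :=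
  ∑ p ∈ adjP G, F p.1 p.2

open Classical in
noncomputable def dcut (G : SimpleGraph V) (S : Finset V) : Finset (V × V) :=
  (adjP G).filter fun p => p.1 ∈ S ∧ p.2 ∉ S

open Classical in
lemma aSum_eq (G : SimpleGraph V) (F : V → V → ℝ) :
    aSum G F = ∑ x, ∑ y, if G.Adj x y then F x y else 0 := by
  classical
  rw [aSum, adjP, Finset.sum_filter, Fintype.sum_prod_type]

lemma aSum_nonneg (G : SimpleGraph V) {F : V → V → ℝ} (h : ∀ x y, 0 ≤ F x y) :
    0 ≤ aSum G F :=
  Finset.sum_nonneg fun p _ => h p.1 p.2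

lemma aSum_mono (G : SimpleGraph V) {F F' : V → V → ℝ} (h : ∀ x y, F x y ≤ F' x y) :
    aSum G F ≤ aSum G F' :=
  Finset.sum_le_sum fun p _ => h p.1 p.2

lemma aSum_swap (G : SimpleGraph V) (F : V → V → ℝ) :
    aSum G (fun x y => F y x) = aSum G F := by
  classical
  rw [aSum_eq, aSum_eq, Finset.sum_comm]
  refine Finset.sum_congr rfl fun a _ => Finset.sum_congr rfl fun b _ => ?_
  exact if_congr (G.adj_comm b a) rfl rfl

lemma aSum_left {d : ℕ} (G : SimpleGraph V) (hreg : ∀ v, gdeg G v = d) (A : V → ℝ) :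
    aSum G (fun x _ => A x) = d * ∑ x, A x := by
  classical
  rw [aSum_eq, Finset.mul_sum]
  refine Finset.sum_congr rfl fun x _ => ?_
  rw [← Finset.sum_filter]
  rw [Finset.sum_const]
  have : (Finset.univ.filter fun y => G.Adj x y).card = d := by
    rw [← hreg x, gdeg]
  rw [this, nsmul_eq_mul]

lemma aSum_right {d : ℕ} (G : SimpleGraph V) (hreg : ∀ v, gdeg G v = d) (B : V → ℝ) :
    aSum G (fun _ y => B y) = d * ∑ x, B x :=
  (aSum_swap G (fun x _ => B x)).trans (aSum_left G hreg B)

open Classical in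
lemma aSum_indicator (G : SimpleGraph V) (S : Finset V) :
    aSum G (fun x y => if x ∈ S ∧ y ∉ S then (1 : ℝ) else 0) = ((dcut G S).card : ℝ) := by
  classical
  rw [aSum, dcut]
  rw [Finset.sum_boole]

open Classical in
open Classical in
lemma aSum_indicator' (G : SimpleGraph V) (S : Finset V) :
    aSum G (fun x y => if y ∈ S ∧ x ∉ S then (1 : ℝ) else 0) = ((dcut G S).card : ℝ) := by
  rw [← aSum_indicator G S, ← aSum_swap G (fun x y => if x ∈ S ∧ y ∉ S then (1:ℝ) else 0)]

lemma boundary_le_dcut (G : SimpleGraph V) (A : Finset V) :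
    (graphBoundary G A).card ≤ (dcut G A).card := by
  classical
  apply Finset.card_le_card_of_injOn
    (fun x => ((if h : ∃ a ∈ A, G.Adj x a then h.choose else x), x))
  · intro x hx
    simp only [Finset.mem_coe, graphBoundary, Finset.mem_filter, Finset.mem_univ, true_and] at hx
    obtain ⟨hxA, hex⟩ := hx
    simp only [dif_pos hex]
    have hspec := hex.choose_spec
    simp only [Finset.mem_coe, dcut, adjP, Finset.mem_filter, Finset.mem_univ, true_and, Finset.filter_filter]
    exact ⟨hspec.2.symm, hspec.1, hxA⟩
  · intro x _ y _ hxy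
    exact congrArg Prod.snd hxy

lemma card_adjP {d : ℕ} (G : SimpleGraph V) (hreg : ∀ v, gdeg G v = d) :
    (adjP G).card = Fintype.card V * d := by
  classical
  rw [adjP, Finset.card_filter, Fintype.sum_prod_type]
  have : ∀ x : V, (∑ y, if G.Adj x y then 1 else 0) = d := by
    intro x
    rw [← Finset.sum_filter, Finset.sum_const, smul_eq_mul, mul_one, ← hreg x, gdeg]
  simp only [this, Finset.sum_const, Finset.card_univ, smul_eq_mul]

end Helpers

section Coarea
variable {V : Type*} [Fintype V]

open Classical in
lemma coarea (G : SimpleGraph V) {c : ℝ} (hc : 0 ≤ c)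
    (hcut : ∀ S : Finset V, (S.card : ℝ) ≤ (Fintype.card V : ℝ) / 2 →
      c * S.card ≤ ((dcut G S).card : ℝ))
    (w : V → ℝ) (hw : ∀ x, 0 ≤ w x)
    (hsupp : (((Finset.univ.filter fun x => w x ≠ 0)).card : ℝ) ≤ (Fintype.card V : ℝ) / 2) :
    2 * c * ∑ x, w x ≤ aSum G fun x y => |w x - w y| := by
  classical
  generalize hN : (Finset.univ.filter fun x => w x ≠ 0).card = N
  induction N using Nat.strong_induction_on generalizing w with
  | _ N ih =>
  rcases Nat.eq_zero_or_pos N with h0 | hpos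
  · subst h0
    rw [Finset.card_eq_zero, Finset.filter_eq_empty_iff] at hN
    have hz : ∀ x, w x = 0 := fun x => not_not.mp (hN (Finset.mem_univ x))
    have h1 : ∑ x, w x = 0 := Finset.sum_eq_zero fun x _ => hz x
    rw [h1, mul_zero]
    exact aSum_nonneg G fun x y => abs_nonneg _
  · set S := Finset.univ.filter fun x => w x ≠ 0 with hSdef
    have hSne : S.Nonempty := Finset.card_pos.mp (hN ▸ hpos)
    set t := S.inf' hSne w with htdef
    obtain ⟨x₀, hx₀S, hx₀⟩ := Finset.exists_mem_eq_inf' hSne w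
    have htle : ∀ x ∈ S, t ≤ w x := fun x hx => Finset.inf'_le w hx
    have ht : 0 < t := by
      rw [htdef, hx₀]
      have : w x₀ ≠ 0 := (Finset.mem_filter.mp hx₀S).2
      exact lt_of_le_of_ne (hw x₀) (Ne.symm this)
    set w' : V → ℝ := fun x => if x ∈ S then w x - t else 0 with hw'def
    have hw' : ∀ x, 0 ≤ w' x := by
      intro x
      simp only [hw'def]
      split
      · next h => linarith [htle x h]
      · exact le_refl 0
    have hwnotS : ∀ x, x ∉ S → w x = 0 := by
      intro x hx
      by_contra h
      exact hx (Finset.mem_filter.mpr ⟨Finset.mem_univ x, h⟩)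
    have hkey : ∀ x, w x = w' x + t * (if x ∈ S then 1 else 0) := by
      intro x
      simp only [hw'def]
      by_cases hx : x ∈ S
      · simp [hx]
      · simp [hx, hwnotS x hx]
    have hsub : (Finset.univ.filter fun x => w' x ≠ 0) ⊆ S.erase x₀ := by
      intro x hx
      simp only [Finset.mem_filter, Finset.mem_univ, true_and, hw'def] at hx
      have hxS : x ∈ S := by
        by_contra h
        simp [h] at hx
      have hxne : x ≠ x₀ := by
        intro h
        subst h
        simp [hxS, ← hx₀, ← htdef] at hx
      exact Finset.mem_erase.mpr ⟨hxne, hxS⟩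
    have hcard' : (Finset.univ.filter fun x => w' x ≠ 0).card < N := by
      calc (Finset.univ.filter fun x => w' x ≠ 0).card ≤ (S.erase x₀).card :=
            Finset.card_le_card hsub
        _ < S.card := Finset.card_erase_lt_of_mem hx₀S
        _ = N := hN
    have hsupp' : (((Finset.univ.filter fun x => w' x ≠ 0)).card : ℝ) ≤ (Fintype.card V : ℝ) / 2 :=
      le_trans (Nat.cast_le.mpr ((Finset.card_le_card hsub).trans (Finset.card_erase_le))) hsupp
    have hIH := ih _ hcard' w' hw' hsupp' rfl
    have hpt : ∀ x y, |w x - w y| = |w' x - w' y| +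
        t * ((if x ∈ S ∧ y ∉ S then (1:ℝ) else 0) + (if y ∈ S ∧ x ∉ S then (1:ℝ) else 0)) := by
      intro x y
      by_cases hx : x ∈ S <;> by_cases hy : y ∈ S
      · have e1 : w' x = w x - t := by simp [hw'def, hx]
        have e2 : w' y = w y - t := by simp [hw'def, hy]
        rw [e1, e2, if_neg (by simp [hy]), if_neg (by simp [hx])]
        have : w x - t - (w y - t) = w x - w y := by ring
        rw [this]
        ring
      · have e1 : w' x = w x - t := by simp [hw'def, hx]
        have e2 : w' y = 0 := by simp [hw'def, hy]
        have e3 : w y = 0 := hwnotS y hy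
        rw [e1, e2, e3, if_pos ⟨hx, hy⟩, if_neg (by simp [hy])]
        rw [sub_zero, sub_zero, abs_of_nonneg (hw x),
          abs_of_nonneg (by linarith [htle x hx] : (0:ℝ) ≤ w x - t)]
        ring
      · have e1 : w' x = 0 := by simp [hw'def, hx]
        have e2 : w' y = w y - t := by simp [hw'def, hy]
        have e3 : w x = 0 := hwnotS x hx
        rw [e1, e2, e3, if_neg (by simp [hx]), if_pos ⟨hy, hx⟩]
        rw [zero_sub, zero_sub, abs_neg, abs_neg, abs_of_nonneg (hw y),
          abs_of_nonneg (by linarith [htle y hy] : (0:ℝ) ≤ w y - t)]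
        ring
      · have e1 : w' x = 0 := by simp [hw'def, hx]
        have e2 : w' y = 0 := by simp [hw'def, hy]
        rw [e1, e2, hwnotS x hx, hwnotS y hy, if_neg (by simp [hx]), if_neg (by simp [hy])]
        ring
    have hsplit : aSum G (fun x y => |w x - w y|) =
        aSum G (fun x y => |w' x - w' y|) + t * (((dcut G S).card : ℝ) + ((dcut G S).card : ℝ)) := by
      rw [show ((dcut G S).card : ℝ) + ((dcut G S).card : ℝ) =
          aSum G (fun x y => if x ∈ S ∧ y ∉ S then (1:ℝ) else 0) +
          aSum G (fun x y => if y ∈ S ∧ x ∉ S then (1:ℝ) else 0) from by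
        rw [aSum_indicator G S, aSum_indicator' G S]]
      unfold aSum
      rw [← Finset.sum_add_distrib, Finset.mul_sum, ← Finset.sum_add_distrib]
      exact Finset.sum_congr rfl fun p _ => hpt p.1 p.2
    have hsum : ∑ x, w x = (∑ x, w' x) + t * S.card := by
      calc ∑ x, w x = ∑ x, (w' x + t * (if x ∈ S then 1 else 0)) :=
            Finset.sum_congr rfl fun x _ => hkey x
        _ = (∑ x, w' x) + t * ∑ x, (if x ∈ S then (1:ℝ) else 0) := by
            rw [Finset.sum_add_distrib, Finset.mul_sum]
        _ = (∑ x, w' x) + t * S.card := by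
            rw [Finset.sum_boole]
            simp
    have hcutS := hcut S hsupp
    rw [hsplit, hsum]
    nlinarith [hIH, mul_le_mul_of_nonneg_left hcutS ht.le]

end Coarea

section Poincare
variable {V : Type*} [Fintype V]

open Classical in
lemma poincare_nonneg (G : SimpleGraph V) {d : ℕ} {c : ℝ} (hc : 0 ≤ c)
    (hreg : ∀ v, gdeg G v = d)
    (hcut : ∀ S : Finset V, (S.card : ℝ) ≤ (Fintype.card V : ℝ) / 2 →
      c * S.card ≤ ((dcut G S).card : ℝ))
    (u : V → ℝ) (hu : ∀ x, 0 ≤ u x)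
    (hsupp : (((Finset.univ.filter fun x => u x ≠ 0)).card : ℝ) ≤ (Fintype.card V : ℝ) / 2) :
    c ^ 2 * ∑ x, (u x) ^ 2 ≤ d * aSum G fun x y => (u x - u y) ^ 2 := by
  classical
  set w : V → ℝ := fun x => (u x) ^ 2 with hwdef
  have hfil : (Finset.univ.filter fun x => w x ≠ 0) = (Finset.univ.filter fun x => u x ≠ 0) := by
    apply Finset.filter_congr
    intro x _
    simp [hwdef, pow_eq_zero_iff]
  have hco := coarea G hc hcut w (fun x => sq_nonneg (u x)) (by rw [hfil]; exact hsupp)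
  -- rewrite |w x - w y| = |u x - u y| * (u x + u y)
  have habs : ∀ x y : V, |w x - w y| = |u x - u y| * (u x + u y) := by
    intro x y
    have : w x - w y = (u x - u y) * (u x + u y) := by simp [hwdef]; ring
    rw [this, abs_mul, abs_of_nonneg (by linarith [hu x, hu y] : (0:ℝ) ≤ u x + u y)]
  have hco2 : 2 * c * ∑ x, (u x) ^ 2 ≤ ∑ p ∈ adjP G, |u p.1 - u p.2| * (u p.1 + u p.2) := by
    refine le_trans hco (le_of_eq ?_)
    exact Finset.sum_congr rfl fun p _ => habs p.1 p.2
  set Q : ℝ := aSum G fun x y => (u x - u y) ^ 2 with hQdef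
  have hQnn : 0 ≤ Q := aSum_nonneg G fun x y => sq_nonneg _
  set Ssq : ℝ := ∑ x, (u x) ^ 2 with hSdef
  have hSnn : 0 ≤ Ssq := Finset.sum_nonneg fun x _ => sq_nonneg _
  -- Cauchy-Schwarz
  have hcs : (∑ p ∈ adjP G, |u p.1 - u p.2| * (u p.1 + u p.2)) ^ 2 ≤
      Q * ∑ p ∈ adjP G, (u p.1 + u p.2) ^ 2 := by
    have := Finset.sum_mul_sq_le_sq_mul_sq (adjP G)
      (fun p => |u p.1 - u p.2|) (fun p => u p.1 + u p.2)
    have heq : ∑ p ∈ adjP G, |u p.1 - u p.2| ^ 2 = Q := by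
      rw [hQdef, aSum]
      exact Finset.sum_congr rfl fun p _ => sq_abs _
    rw [heq] at this
    exact this
  have hP : ∑ p ∈ adjP G, (u p.1 + u p.2) ^ 2 ≤ 4 * d * Ssq := by
    have h1 : ∑ p ∈ adjP G, (u p.1 + u p.2) ^ 2 ≤
        ∑ p ∈ adjP G, (2 * (u p.1) ^ 2 + 2 * (u p.2) ^ 2) := by
      refine Finset.sum_le_sum fun p _ => ?_
      nlinarith [sq_nonneg (u p.1 - u p.2)]
    have h2 : ∑ p ∈ adjP G, (2 * (u p.1) ^ 2 + 2 * (u p.2) ^ 2) =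
        2 * aSum G (fun x _ => (u x) ^ 2) + 2 * aSum G (fun _ y => (u y) ^ 2) := by
      unfold aSum
      rw [Finset.sum_add_distrib, Finset.mul_sum, Finset.mul_sum]
    rw [h2, aSum_left G hreg, aSum_right G hreg] at h1
    refine h1.trans (le_of_eq ?_)
    rw [hSdef]
    ring
  rcases eq_or_lt_of_le hSnn with hS0 | hSpos
  · rw [← hS0, mul_zero]
    positivity
  · have key : (2 * c * Ssq) ^ 2 ≤ Q * (4 * d * Ssq) := by
      calc (2 * c * Ssq) ^ 2 ≤ (∑ p ∈ adjP G, |u p.1 - u p.2| * (u p.1 + u p.2)) ^ 2 := by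
            apply sq_le_sq'
            · nlinarith
            · exact hco2
        _ ≤ Q * ∑ p ∈ adjP G, (u p.1 + u p.2) ^ 2 := hcs
        _ ≤ Q * (4 * d * Ssq) := by
            exact mul_le_mul_of_nonneg_left hP hQnn
    nlinarith [key, hSpos]

lemma exists_median [Nonempty V] (g : V → ℝ) :
    ∃ M : ℝ, 2 * (Finset.univ.filter fun x => M < g x).card ≤ Fintype.card V ∧
      2 * (Finset.univ.filter fun x => g x < M).card ≤ Fintype.card V := by
  classical
  set n := Fintype.card V with hn
  set s : Finset ℝ := Finset.univ.image g with hs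
  have hsne : s.Nonempty := (Finset.univ_nonempty).image g
  set T : Finset ℝ := s.filter fun t => n ≤ 2 * (Finset.univ.filter fun x => g x ≤ t).card with hT
  have hTne : T.Nonempty := by
    refine ⟨s.max' hsne, Finset.mem_filter.mpr ⟨s.max'_mem hsne, ?_⟩⟩
    have : (Finset.univ.filter fun x => g x ≤ s.max' hsne) = Finset.univ := by
      refine Finset.filter_true_of_mem fun x _ => ?_
      exact s.le_max' (g x) (Finset.mem_image_of_mem g (Finset.mem_univ x))
    rw [this]
    simp [hn, Finset.card_univ]
    omega
  set M := T.min' hTne with hM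
  have hMT : M ∈ T := T.min'_mem hTne
  have hMle : n ≤ 2 * (Finset.univ.filter fun x => g x ≤ M).card := (Finset.mem_filter.mp hMT).2
  refine ⟨M, ?_, ?_⟩
  · have hcompl : (Finset.univ.filter fun x => M < g x).card =
        n - (Finset.univ.filter fun x => g x ≤ M).card := by
      rw [hn, ← Finset.card_univ, ← Finset.card_filter_add_card_filter_not
        (s := (Finset.univ : Finset V)) (fun x => g x ≤ M)]
      simp only [not_le]
      omega
    have hle : (Finset.univ.filter fun x => g x ≤ M).card ≤ n := by
      rw [hn, ← Finset.card_univ]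
      exact Finset.card_le_card (Finset.filter_subset _ _)
    omega
  · by_cases hemp : (Finset.univ.filter fun x => g x < M) = ∅
    · rw [hemp]
      simp
    · obtain ⟨x₁, hx₁⟩ := Finset.nonempty_iff_ne_empty.mpr hemp
      have hx₁' : g x₁ < M := (Finset.mem_filter.mp hx₁).2
      set s' : Finset ℝ := s.filter fun t => t < M with hs'
      have hs'ne : s'.Nonempty :=
        ⟨g x₁, Finset.mem_filter.mpr ⟨Finset.mem_image_of_mem g (Finset.mem_univ x₁), hx₁'⟩⟩
      set t' := s'.max' hs'ne with ht'
      have ht'M : t' < M := (Finset.mem_filter.mp (s'.max'_mem hs'ne)).2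
      have ht's : t' ∈ s := (Finset.mem_filter.mp (s'.max'_mem hs'ne)).1
      have ht'T : t' ∉ T := fun h => absurd (T.min'_le t' h) (not_le.mpr ht'M)
      have ht'small : 2 * (Finset.univ.filter fun x => g x ≤ t').card < n := by
        by_contra h
        exact ht'T (Finset.mem_filter.mpr ⟨ht's, by omega⟩)
      have hsubset : (Finset.univ.filter fun x => g x < M) ⊆
          (Finset.univ.filter fun x => g x ≤ t') := by
        intro x hx
        have hgx : g x < M := (Finset.mem_filter.mp hx).2
        have : g x ∈ s' := Finset.mem_filter.mpr
          ⟨Finset.mem_image_of_mem g (Finset.mem_univ x), hgx⟩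
        exact Finset.mem_filter.mpr ⟨Finset.mem_univ x, s'.le_max' (g x) this⟩
      have := Finset.card_le_card hsubset
      omega

lemma sq_split_aux (A B : ℝ) :
    (max A 0 - max B 0) ^ 2 + (max (-A) 0 - max (-B) 0) ^ 2 ≤ (A - B) ^ 2 := by
  rcases le_total A 0 with hA | hA <;> rcases le_total B 0 with hB | hB
  · rw [max_eq_right hA, max_eq_right hB, max_eq_left (by linarith), max_eq_left (by linarith)]
    nlinarith
  · rw [max_eq_right hA, max_eq_left hB, max_eq_left (by linarith), max_eq_right (by linarith)]
    nlinarith [mul_nonneg (neg_nonneg.mpr hA) hB]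
  · rw [max_eq_left hA, max_eq_right hB, max_eq_right (by linarith), max_eq_left (by linarith)]
    nlinarith [mul_nonneg hA (neg_nonneg.mpr hB)]
  · rw [max_eq_left hA, max_eq_left hB, max_eq_right (by linarith), max_eq_right (by linarith)]
    nlinarith

lemma sq_split_aux2 (A : ℝ) : (max A 0) ^ 2 + (max (-A) 0) ^ 2 = A ^ 2 := by
  rcases le_total A 0 with hA | hA
  · rw [max_eq_right hA, max_eq_left (by linarith)]
    ring
  · rw [max_eq_left hA, max_eq_right (by linarith)]
    ring

open Classical in
lemma poincare [Nonempty V] (G : SimpleGraph V) {d : ℕ} {c : ℝ} (hc : 0 ≤ c)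
    (hreg : ∀ v, gdeg G v = d)
    (hcut : ∀ S : Finset V, (S.card : ℝ) ≤ (Fintype.card V : ℝ) / 2 →
      c * S.card ≤ ((dcut G S).card : ℝ))
    (g : V → ℝ) (hg : ∑ x, g x = 0) :
    c ^ 2 * ∑ x, (g x) ^ 2 ≤ d * aSum G fun x y => (g x - g y) ^ 2 := by
  classical
  obtain ⟨M, hM1, hM2⟩ := exists_median g
  set up : V → ℝ := fun x => max (g x - M) 0 with hup
  set um : V → ℝ := fun x => max (M - g x) 0 with hum
  have hfilp : (Finset.univ.filter fun x => up x ≠ 0) = (Finset.univ.filter fun x => M < g x) := by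
    apply Finset.filter_congr
    intro x _
    simp only [hup, ne_eq]
    constructor
    · intro h
      by_contra hcon
      push_neg at hcon
      exact h (max_eq_right (by linarith))
    · intro h hcon
      have h2 := le_max_left (g x - M) 0
      rw [hcon] at h2
      linarith
  have hfilm : (Finset.univ.filter fun x => um x ≠ 0) = (Finset.univ.filter fun x => g x < M) := by
    apply Finset.filter_congr
    intro x _
    simp only [hum, ne_eq]
    constructor
    · intro h
      by_contra hcon
      push_neg at hcon
      exact h (max_eq_right (by linarith))
    · intro h hcon
      have h2 := le_max_left (M - g x) 0
      rw [hcon] at h2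
      linarith
  have hn2 : ∀ k : ℕ, 2 * k ≤ Fintype.card V → (k : ℝ) ≤ (Fintype.card V : ℝ) / 2 := by
    intro k hk
    have : (2 * k : ℝ) ≤ (Fintype.card V : ℝ) := by exact_mod_cast hk
    linarith
  have hpp := poincare_nonneg G hc hreg hcut up (fun x => le_max_right _ _)
    (by rw [hfilp]; exact hn2 _ hM1)
  have hpm := poincare_nonneg G hc hreg hcut um (fun x => le_max_right _ _)
    (by rw [hfilm]; exact hn2 _ hM2)
  have hsum_eq : (∑ x, (up x) ^ 2) + (∑ x, (um x) ^ 2) = ∑ x, (g x - M) ^ 2 := by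
    rw [← Finset.sum_add_distrib]
    refine Finset.sum_congr rfl fun x _ => ?_
    have := sq_split_aux2 (g x - M)
    simp only [hup, hum, neg_sub] at this ⊢
    rw [this]
  have hgM : ∑ x, (g x) ^ 2 ≤ ∑ x, (g x - M) ^ 2 := by
    have hexp : ∑ x, (g x - M) ^ 2 =
        (∑ x, (g x) ^ 2) + (Fintype.card V : ℝ) * M ^ 2 := by
      have h1 : ∀ x : V, (g x - M) ^ 2 = (g x) ^ 2 - 2 * M * g x + M ^ 2 := fun x => by ring
      simp_rw [h1]
      rw [Finset.sum_add_distrib, Finset.sum_sub_distrib, ← Finset.mul_sum, hg,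
        Finset.sum_const, Finset.card_univ, nsmul_eq_mul]
      ring
    rw [hexp]
    have : (0:ℝ) ≤ (Fintype.card V : ℝ) * M ^ 2 := by positivity
    linarith
  have hQmono : aSum G (fun x y => (up x - up y) ^ 2) + aSum G (fun x y => (um x - um y) ^ 2) ≤
      aSum G (fun x y => (g x - g y) ^ 2) := by
    unfold aSum
    rw [← Finset.sum_add_distrib]
    refine Finset.sum_le_sum fun p _ => ?_
    have := sq_split_aux (g p.1 - M) (g p.2 - M)
    simp only [hup, hum, neg_sub] at this ⊢
    calc (max (g p.1 - M) 0 - max (g p.2 - M) 0) ^ 2 + (max (M - g p.1) 0 - max (M - g p.2) 0) ^ 2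
        ≤ ((g p.1 - M) - (g p.2 - M)) ^ 2 := this
      _ = (g p.1 - g p.2) ^ 2 := by ring_nf
  calc c ^ 2 * ∑ x, (g x) ^ 2 ≤ c ^ 2 * ∑ x, (g x - M) ^ 2 :=
        mul_le_mul_of_nonneg_left hgM (sq_nonneg c)
    _ = c ^ 2 * ((∑ x, (up x) ^ 2) + (∑ x, (um x) ^ 2)) := by rw [hsum_eq]
    _ = c ^ 2 * (∑ x, (up x) ^ 2) + c ^ 2 * (∑ x, (um x) ^ 2) := by ring
    _ ≤ d * aSum G (fun x y => (up x - up y) ^ 2) + d * aSum G (fun x y => (um x - um y) ^ 2) :=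
        add_le_add hpp hpm
    _ = d * (aSum G (fun x y => (up x - up y) ^ 2) + aSum G (fun x y => (um x - um y) ^ 2)) := by
        ring
    _ ≤ d * aSum G (fun x y => (g x - g y) ^ 2) :=
        mul_le_mul_of_nonneg_left hQmono (Nat.cast_nonneg d)

end Poincare

section L2Facts

lemma l2summable (v : lp (fun _ : ℕ => ℝ) 2) :
    Summable fun i => ((v : ℕ → ℝ) i) ^ 2 := by
  have h := (lp.memℓp v).summable (p := 2) (by norm_num)
  refine h.congr fun i => ?_
  have h2 : ((2 : ENNReal)).toReal = (2 : ℝ) := by norm_num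
  rw [h2, Real.rpow_two, Real.norm_eq_abs, sq_abs]

lemma l2norm_sq (v : lp (fun _ : ℕ => ℝ) 2) :
    ‖v‖ ^ 2 = ∑' i, ((v : ℕ → ℝ) i) ^ 2 := by
  have h := lp.norm_rpow_eq_tsum (p := 2) (by norm_num) v
  have h2 : ((2 : ENNReal)).toReal = (2 : ℝ) := by norm_num
  rw [h2] at h
  rw [← Real.rpow_two, h]
  exact tsum_congr fun i => by rw [Real.rpow_two, Real.norm_eq_abs, sq_abs]

lemma coe_sum {V : Type*} (s : Finset V) (F : V → lp (fun _ : ℕ => ℝ) 2) (i : ℕ) :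
    ((∑ x ∈ s, F x : lp (fun _ : ℕ => ℝ) 2) : ℕ → ℝ) i = ∑ x ∈ s, (F x : ℕ → ℝ) i := by
  classical
  induction s using Finset.induction_on with
  | empty => simp
  | insert a s h ih =>
    rw [Finset.sum_insert h, Finset.sum_insert h, lp.coeFn_add, Pi.add_apply, ih]

end L2Facts

set_option maxHeartbeats 1000000 in
open Classical in
theorem expander_half_in_ball (d : ℕ) (c : ℝ) (hc : 0 < c) (E : Expander d c)
    (f : ∀ n : ℕ, E.V n → lp (fun _ : ℕ => ℝ) 2)
    (hlip : ∀ (n : ℕ) (x y : E.V n), ‖f n x - f n y‖ ≤ ((E.G n).dist x y : ℝ))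
    (hzero : ∀ n : ℕ, (∑ x : E.V n, f n x) = 0) :
    ∃ R : ℝ, 0 < R ∧ ∀ n : ℕ,
      (Fintype.card (E.V n) : ℝ) / 2 <
        ((Finset.univ.filter fun x : E.V n => ‖f n x‖ ≤ R).card : ℝ) := by
  classical
  set K : ℝ := (d : ℝ) ^ 2 / c ^ 2 with hK
  have hK0 : 0 ≤ K := by positivity
  refine ⟨Real.sqrt (2 * K + 2), Real.sqrt_pos.mpr (by linarith), ?_⟩
  intro n
  haveI hne : Nonempty (E.V n) := (E.connected n).nonempty
  set m := Fintype.card (E.V n) with hm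
  have hm1 : 1 ≤ m := Fintype.card_pos
  have hcut : ∀ S : Finset (E.V n), (S.card : ℝ) ≤ (m : ℝ) / 2 →
      c * S.card ≤ ((dcut (E.G n) S).card : ℝ) := by
    intro S hS
    refine le_trans (E.expansion n S hS) ?_
    exact_mod_cast Nat.cast_le.mpr (boundary_le_dcut (E.G n) S)
  set g : ℕ → E.V n → ℝ := fun i x => (f n x : ℕ → ℝ) i with hgdef
  have hgsum : ∀ i, ∑ x, g i x = 0 := by
    intro i
    have h0 := congrArg (fun v : lp (fun _ : ℕ => ℝ) 2 => (v : ℕ → ℝ) i) (hzero n)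
    simp only at h0
    rw [coe_sum] at h0
    simpa using h0
  have hpo : ∀ i, c ^ 2 * ∑ x, (g i x) ^ 2 ≤
      d * aSum (E.G n) fun x y => (g i x - g i y) ^ 2 :=
    fun i => poincare (E.G n) hc.le (E.regular n) hcut (g i) (hgsum i)
  have hsum1 : ∀ x, Summable fun i => (g i x) ^ 2 := fun x => l2summable (f n x)
  have hsumd : ∀ x y : E.V n, Summable fun i => (g i x - g i y) ^ 2 := by
    intro x y
    refine (l2summable (f n x - f n y)).congr fun i => ?_
    rw [lp.coeFn_sub, Pi.sub_apply]
  have hS1 : Summable fun i => ∑ x, (g i x) ^ 2 := summable_sum fun x _ => hsum1 x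
  have hS2 : Summable fun i => aSum (E.G n) fun x y => (g i x - g i y) ^ 2 := by
    unfold aSum
    exact summable_sum fun p _ => hsumd p.1 p.2
  have hts := (hS1.mul_left _).tsum_le_tsum hpo (hS2.mul_left _)
  rw [tsum_mul_left, tsum_mul_left] at hts
  have hL : ∑' i, ∑ x, (g i x) ^ 2 = ∑ x, ‖f n x‖ ^ 2 := by
    rw [Summable.tsum_finsetSum fun x _ => hsum1 x]
    exact Finset.sum_congr rfl fun x _ => (l2norm_sq (f n x)).symm
  have hR : (∑' i, aSum (E.G n) fun x y => (g i x - g i y) ^ 2) =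
      ∑ p ∈ adjP (E.G n), ‖f n p.1 - f n p.2‖ ^ 2 := by
    unfold aSum
    rw [Summable.tsum_finsetSum fun p _ => hsumd p.1 p.2]
    refine Finset.sum_congr rfl fun p _ => ?_
    rw [l2norm_sq]
    exact tsum_congr fun i => by rw [lp.coeFn_sub, Pi.sub_apply]
  rw [hL, hR] at hts
  have hedge : ∑ p ∈ adjP (E.G n), ‖f n p.1 - f n p.2‖ ^ 2 ≤ ((adjP (E.G n)).card : ℝ) := by
    have h1 : ∀ p ∈ adjP (E.G n), ‖f n p.1 - f n p.2‖ ^ 2 ≤ 1 := by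
      intro p hp
      have hadj : (E.G n).Adj p.1 p.2 := by
        simpa [adjP] using hp
      have hd : (E.G n).dist p.1 p.2 = 1 := SimpleGraph.dist_eq_one_iff_adj.mpr hadj
      have := hlip n p.1 p.2
      rw [hd] at this
      push_cast at this
      nlinarith [norm_nonneg (f n p.1 - f n p.2)]
    calc ∑ p ∈ adjP (E.G n), ‖f n p.1 - f n p.2‖ ^ 2 ≤ ∑ _p ∈ adjP (E.G n), (1 : ℝ) :=
          Finset.sum_le_sum h1
      _ = ((adjP (E.G n)).card : ℝ) := by rw [Finset.sum_const, nsmul_eq_mul, mul_one]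
  have hcard : ((adjP (E.G n)).card : ℝ) = (m : ℝ) * d := by
    rw [card_adjP (E.G n) (E.regular n)]
    push_cast
    rfl
  have htotal : c ^ 2 * ∑ x, ‖f n x‖ ^ 2 ≤ (d : ℝ) * ((m : ℝ) * d) := by
    refine le_trans hts ?_
    rw [← hcard]
    exact mul_le_mul_of_nonneg_left hedge (Nat.cast_nonneg d)
  have hvar : ∑ x, ‖f n x‖ ^ 2 ≤ K * m := by
    have hc2 : (0 : ℝ) < c ^ 2 := by positivity
    rw [hK]
    rw [div_mul_eq_mul_div, le_div_iff₀ hc2]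
    nlinarith [htotal]
  have hR2 : Real.sqrt (2 * K + 2) ^ 2 = 2 * K + 2 := Real.sq_sqrt (by linarith)
  have hRpos : (0 : ℝ) < Real.sqrt (2 * K + 2) := Real.sqrt_pos.mpr (by linarith)
  set B := Finset.univ.filter fun x : E.V n => ‖f n x‖ ≤ Real.sqrt (2 * K + 2) with hB
  set Bc := Finset.univ.filter fun x : E.V n => ¬ (‖f n x‖ ≤ Real.sqrt (2 * K + 2)) with hBc
  have hsplitc : B.card + Bc.card = m := by
    rw [hB, hBc, Finset.card_filter_add_card_filter_not, Finset.card_univ]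
  have hBcbound : (Bc.card : ℝ) * (2 * K + 2) ≤ K * m := by
    have h1 : (Bc.card : ℝ) * (2 * K + 2) = ∑ _x ∈ Bc, (2 * K + 2) := by
      rw [Finset.sum_const, nsmul_eq_mul]
    rw [h1]
    have h2 : ∑ _x ∈ Bc, (2 * K + 2) ≤ ∑ x ∈ Bc, ‖f n x‖ ^ 2 := by
      refine Finset.sum_le_sum fun x hx => ?_
      have hx' : ¬ (‖f n x‖ ≤ Real.sqrt (2 * K + 2)) := (Finset.mem_filter.mp hx).2
      push_neg at hx'
      nlinarith [hR2, hRpos]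
    refine le_trans h2 (le_trans ?_ hvar)
    exact Finset.sum_le_sum_of_subset_of_nonneg (Finset.subset_univ Bc)
      fun x _ _ => sq_nonneg _
  have hmR : (1 : ℝ) ≤ (m : ℝ) := by exact_mod_cast hm1
  have hBclt : (Bc.card : ℝ) < (m : ℝ) / 2 := by nlinarith [hBcbound]
  have hBcard : (B.card : ℝ) = (m : ℝ) - (Bc.card : ℝ) := by
    have := hsplitc
    push_cast [← this]
    ring
  rw [hBcard]
  linarith
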